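/- Let P be an orientable 3-dimensional pseudomanifold associated to a straight integral relative cycle on a hyperbolic 3-manifold M with geodesic boundary, with no simplex supported on ∂M. Then every tetrahedron of P has at most one 2-dimensional boundary face, every tetrahedron has at most three edges contained in |∂P|, and every tetrahedron without boundary 2-faces has at most two edges contained in |∂P|. -/

import Mathlib

open scoped Classical
noncomputable section

/-! **Statement 16.**  We work in the Klein (projective) model: the universal cover of a
hyperbolic 3-manifold `M` with geodesic boundary is a convex subset of the open unit ball
`B ⊆ ℝ³` bounded by a family of geodesic planes `P i` (intersections with affine
hyperplanes) which are pairwise disjoint inside the ball.  A straight (geodesic) simplex of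
a straight relative cycle on `M` lifts to the geodesic simplex spanned by lifted vertices
`v 0, …, v 3 ∈ B`; an `m`-face of the straightened simplex is supported on `∂M` exactly
when its `m + 1` vertices lie on one of the boundary planes.  That the simplex is not
supported on `∂M` means that not all four vertices lie on a single boundary plane. -/

variable {ι : Type*}

/-- The face of the tetrahedron `v` opposite to the vertex `k` lies on the geodesic
boundary: the remaining three vertices lie on a common boundary plane. -/
def FaceOnBoundary (P : ι → Set (EuclideanSpace ℝ (Fin 3)))
    (v : Fin 4 → EuclideanSpace ℝ (Fin 3)) (k : Fin 4) : Prop :=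
  ∃ i, ∀ a, a ≠ k → v a ∈ P i

/-- The edge `e` (an unordered pair of vertices) of the tetrahedron `v` lies on the
geodesic boundary: both of its endpoints lie on a common boundary plane. -/
def EdgeOnBoundary (P : ι → Set (EuclideanSpace ℝ (Fin 3)))
    (v : Fin 4 → EuclideanSpace ℝ (Fin 3)) (e : Sym2 (Fin 4)) : Prop :=
  ∃ i, ∀ a ∈ e, v a ∈ P i

/-- The graph on the four vertices whose edges are the boundary edges. -/
def bdryGraph (P : ι → Set (EuclideanSpace ℝ (Fin 3)))
    (v : Fin 4 → EuclideanSpace ℝ (Fin 3)) : SimpleGraph (Fin 4) where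
  Adj a b := a ≠ b ∧ ∃ i, v a ∈ P i ∧ v b ∈ P i
  symm := ⟨by rintro a b ⟨hab, i, ha, hb⟩; exact ⟨hab.symm, i, hb, ha⟩⟩
  loopless := ⟨by rintro a ⟨h, -⟩; exact h rfl⟩

lemma bdryGraph_adj (P : ι → Set (EuclideanSpace ℝ (Fin 3)))
    (v : Fin 4 → EuclideanSpace ℝ (Fin 3)) (a b : Fin 4) :
    (bdryGraph P v).Adj a b ↔ a ≠ b ∧ ∃ i, v a ∈ P i ∧ v b ∈ P i := Iff.rfl

/-- Let `P` be a family of geodesic planes (affine hyperplanes) which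
are pairwise disjoint inside the open unit ball, and let `v` be the vertices (inside the
ball, i.e. nonideal) of a straight tetrahedron of the pseudomanifold `P` associated to a
straight integral relative cycle on `M`, not supported on the boundary (not all four
vertices on a single boundary plane).  Then:
(1) the tetrahedron has at most one 2-dimensional boundary face;
(2) it has at most three edges contained in `|∂P|`; and
(3) if it has no boundary 2-face, it has at most two edges contained in `|∂P|`. -/
theorem straight_tetrahedron_boundary_faces_and_edges
    (P : ι → Set (EuclideanSpace ℝ (Fin 3)))
    (hplane : ∀ i, ∃ f : (EuclideanSpace ℝ (Fin 3)) →ᵃ[ℝ] ℝ,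
      f.linear ≠ 0 ∧ P i = f ⁻¹' {0})
    (hdisj : ∀ i j, i ≠ j → P i ∩ P j ∩ Metric.ball (0 : EuclideanSpace ℝ (Fin 3)) 1 = ∅)
    (v : Fin 4 → EuclideanSpace ℝ (Fin 3))
    (hv : ∀ a, v a ∈ Metric.ball (0 : EuclideanSpace ℝ (Fin 3)) 1)
    (hnot : ¬ ∃ i, ∀ a, v a ∈ P i) :
    (∀ k l : Fin 4, FaceOnBoundary P v k → FaceOnBoundary P v l → k = l) ∧
      (Finset.univ.filter fun e : Sym2 (Fin 4) =>
          ¬ e.IsDiag ∧ EdgeOnBoundary P v e).card ≤ 3 ∧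
      ((¬ ∃ k, FaceOnBoundary P v k) →
        (Finset.univ.filter fun e : Sym2 (Fin 4) =>
          ¬ e.IsDiag ∧ EdgeOnBoundary P v e).card ≤ 2) := by
  classical
  -- Each vertex lies on at most one plane.
  have hu : ∀ a : Fin 4, ∀ i j, v a ∈ P i → v a ∈ P j → i = j := by
    intro a i j hi hj
    by_contra h
    have h2 := hdisj i j h
    have h3 : v a ∈ P i ∩ P j ∩ Metric.ball (0 : EuclideanSpace ℝ (Fin 3)) 1 :=
      ⟨⟨hi, hj⟩, hv a⟩
    rw [h2] at h3
    exact h3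
  -- Part (1): uniqueness of the boundary face.
  have hface_unique : ∀ k l : Fin 4, FaceOnBoundary P v k → FaceOnBoundary P v l → k = l := by
    rintro k l ⟨i, hi⟩ ⟨j, hj⟩
    by_contra hkl
    obtain ⟨a, hak, hal⟩ : ∃ a : Fin 4, a ≠ k ∧ a ≠ l := by
      have hcard : ({k, l} : Finset (Fin 4)).card ≤ 2 :=
        (Finset.card_insert_le _ _).trans (by simp)
      have hsd : (Finset.univ \ {k, l} : Finset (Fin 4)).card
          = 4 - ({k, l} : Finset (Fin 4)).card := by
        rw [Finset.card_sdiff, Finset.inter_univ]; simp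
      have : (Finset.univ \ {k, l} : Finset (Fin 4)).Nonempty := by
        rw [← Finset.card_pos, hsd]; omega
      obtain ⟨a, ha⟩ := this
      simp only [Finset.mem_sdiff, Finset.mem_univ, true_and, Finset.mem_insert,
        Finset.mem_singleton, not_or] at ha
      exact ⟨a, ha.1, ha.2⟩
    have hij : i = j := hu a i j (hi a hak) (hj a hal)
    exact hnot ⟨i, fun x => by
      by_cases hx : x = k
      · subst hx; rw [hij]; exact hj x hkl
      · exact hi x hx⟩
  refine ⟨hface_unique, ?_⟩
  set G := bdryGraph P v with hGdef
  -- The filtered edge set is exactly the edge finset of `G`.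
  have hedges : (Finset.univ.filter fun e : Sym2 (Fin 4) =>
      ¬ e.IsDiag ∧ EdgeOnBoundary P v e) = G.edgeFinset := by
    ext e
    induction e using Sym2.inductionOn with
    | hf a b =>
      rw [Finset.mem_filter]
      simp only [Finset.mem_filter, Finset.mem_univ, true_and,
        SimpleGraph.mem_edgeFinset, SimpleGraph.mem_edgeSet, Sym2.mk_isDiag_iff,
        EdgeOnBoundary, hGdef, bdryGraph_adj]
      constructor
      · rintro ⟨hne, i, h⟩
        exact ⟨hne, i, h a (by simp), h b (by simp)⟩
      · rintro ⟨hne, i, ha, hb⟩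
        refine ⟨hne, i, fun x hx => ?_⟩
        rcases Sym2.mem_iff.mp hx with rfl | rfl
        · exact ha
        · exact hb
  -- Every vertex has degree at most 2.
  have hdeg2 : ∀ a : Fin 4, G.degree a ≤ 2 := by
    intro a
    by_contra h
    push_neg at h
    have h3 : 3 ≤ (G.neighborFinset a).card := h
    obtain ⟨t, hts, htc⟩ := Finset.exists_subset_card_eq h3
    obtain ⟨b, c, d, hbc, hbd, hcd, rfl⟩ := Finset.card_eq_three.mp htc
    have hb := (G.mem_neighborFinset a b).mp (hts (by simp))
    have hc := (G.mem_neighborFinset a c).mp (hts (by simp))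
    have hd := (G.mem_neighborFinset a d).mp (hts (by simp))
    rw [hGdef, bdryGraph_adj] at hb hc hd
    obtain ⟨hab, i, hvai, hvbi⟩ := hb
    obtain ⟨hac, j, hvaj, hvcj⟩ := hc
    obtain ⟨had, m, hvam, hvdm⟩ := hd
    have hji : j = i := hu a j i hvaj hvai
    have hmi : m = i := hu a m i hvam hvai
    rw [hji] at hvcj
    rw [hmi] at hvdm
    have hcov : (insert a {b, c, d} : Finset (Fin 4)) = Finset.univ := by
      apply Finset.eq_univ_of_card
      rw [Finset.card_insert_of_notMem (by simp [hab, hac, had]), htc]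
      simp
    refine hnot ⟨i, fun x => ?_⟩
    have hx : x ∈ (insert a {b, c, d} : Finset (Fin 4)) := hcov ▸ Finset.mem_univ x
    simp only [Finset.mem_insert, Finset.mem_singleton] at hx
    rcases hx with rfl | rfl | rfl | rfl
    · exact hvai
    · exact hvbi
    · exact hvcj
    · exact hvdm
  -- If there is no boundary face, every vertex has degree at most 1.
  have hdeg1 : (¬ ∃ k, FaceOnBoundary P v k) → ∀ a : Fin 4, G.degree a ≤ 1 := by
    intro hnoface a
    by_contra h
    push_neg at h
    obtain ⟨b, hbmem, c, hcmem, hbc⟩ := Finset.one_lt_card.mp h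
    have hb := (G.mem_neighborFinset a b).mp hbmem
    have hc := (G.mem_neighborFinset a c).mp hcmem
    rw [hGdef, bdryGraph_adj] at hb hc
    obtain ⟨hab, i, hvai, hvbi⟩ := hb
    obtain ⟨hac, j, hvaj, hvcj⟩ := hc
    have hji : j = i := hu a j i hvaj hvai
    rw [hji] at hvcj
    obtain ⟨k, hka, hkb, hkc⟩ : ∃ k : Fin 4, k ≠ a ∧ k ≠ b ∧ k ≠ c := by
      have hcard : ({a, b, c} : Finset (Fin 4)).card ≤ 3 :=
        (Finset.card_insert_le _ _).trans (by
          have := Finset.card_insert_le b ({c} : Finset (Fin 4)); simp at this ⊢; omega)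
      have hsd : (Finset.univ \ {a, b, c} : Finset (Fin 4)).card
          = 4 - ({a, b, c} : Finset (Fin 4)).card := by
        rw [Finset.card_sdiff, Finset.inter_univ]; simp
      have : (Finset.univ \ {a, b, c} : Finset (Fin 4)).Nonempty := by
        rw [← Finset.card_pos, hsd]; omega
      obtain ⟨k, hk⟩ := this
      simp only [Finset.mem_sdiff, Finset.mem_univ, true_and, Finset.mem_insert,
        Finset.mem_singleton, not_or] at hk
      exact ⟨k, hk.1, hk.2.1, hk.2.2⟩
    refine hnoface ⟨k, i, fun x hxk => ?_⟩
    have hcov : (insert k {a, b, c} : Finset (Fin 4)) = Finset.univ := by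
      apply Finset.eq_univ_of_card
      rw [Finset.card_insert_of_notMem (by simp [hka, hkb, hkc]),
        Finset.card_insert_of_notMem (by simp [hab, hac]),
        Finset.card_insert_of_notMem (by simp [hbc])]
      simp
    have hx : x ∈ (insert k {a, b, c} : Finset (Fin 4)) := hcov ▸ Finset.mem_univ x
    simp only [Finset.mem_insert, Finset.mem_singleton] at hx
    rcases hx with rfl | rfl | rfl | rfl
    · exact absurd rfl hxk
    · exact hvai
    · exact hvbi
    · exact hvcj
  -- If there is a boundary face opposite `k`, then `k` has degree 0.
  have hdeg0 : ∀ k : Fin 4, FaceOnBoundary P v k → G.degree k = 0 := by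
    rintro k ⟨i, hi⟩
    rw [SimpleGraph.degree, Finset.card_eq_zero, Finset.eq_empty_iff_forall_notMem]
    intro b hbmem
    have hb := (G.mem_neighborFinset k b).mp hbmem
    rw [hGdef, bdryGraph_adj] at hb
    obtain ⟨hkb, j, hvkj, hvbj⟩ := hb
    have hji : j = i := hu b j i hvbj (hi b (Ne.symm hkb))
    subst hji
    refine hnot ⟨j, fun x => ?_⟩
    by_cases hx : x = k
    · subst hx; exact hvkj
    · exact hi x hx
  have hsum := G.sum_degrees_eq_twice_card_edges
  rw [hedges]
  constructor
  · -- at most 3 boundary edges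
    by_cases hface : ∃ k, FaceOnBoundary P v k
    · obtain ⟨k, hk⟩ := hface
      have hk0 := hdeg0 k hk
      have hbound : ∑ x : Fin 4, G.degree x ≤ 6 := by
        rw [← Finset.sum_erase_add _ _ (Finset.mem_univ k), hk0]
        have h1 : ∑ x ∈ Finset.univ.erase k, G.degree x
            ≤ ∑ _x ∈ Finset.univ.erase k, 2 :=
          Finset.sum_le_sum fun x _ => hdeg2 x
        have h2 : (Finset.univ.erase k).card = 3 := by
          rw [Finset.card_erase_of_mem (Finset.mem_univ k)]; simp
        rw [Finset.sum_const, h2, smul_eq_mul] at h1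
        omega
      omega
    · have hbound : ∑ x : Fin 4, G.degree x ≤ 4 := by
        have h1 : ∑ x : Fin 4, G.degree x ≤ ∑ _x : Fin 4, 1 :=
          Finset.sum_le_sum fun x _ => hdeg1 hface x
        simpa using h1
      omega
  · intro hnoface
    have hbound : ∑ x : Fin 4, G.degree x ≤ 4 := by
      have h1 : ∑ x : Fin 4, G.degree x ≤ ∑ _x : Fin 4, 1 :=
        Finset.sum_le_sum fun x _ => hdeg1 hnoface x
      simpa using h1
    omega

end
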